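/- Let d ≥ 1. If ℤ^d is tiled by finitely many (at least two) Cartesian cosets T_j = v_j + L_j (pairwise disjoint, union ℤ^d), then there exist indices j ≠ m with L_j = L_m, i.e., two of the tiles are translates of one another. -/

import Mathlib

/-- The Cartesian coset `v + (a₁ℤ × ⋯ × a_dℤ)` of `ℤ^d`. -/
def cartCoset (d : ℕ) (v : Fin d → ℤ) (a : Fin d → ℕ) : Set (Fin d → ℤ) :=
  {x | ∀ i, (a i : ℤ) ∣ (x i - v i)}

section AuxTilingLemmas
open Complex Finset
lemma zeta_pow_eq_one_iff (A : ℕ) (hA : 0 < A) (b : ℕ) :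
    Complex.exp (2 * Real.pi * Complex.I / A) ^ b = 1 ↔ A ∣ b := by
  have hA' : (A : ℂ) ≠ 0 := Nat.cast_ne_zero.2 hA.ne'
  have h2 : (2 * (Real.pi:ℂ) * Complex.I) ≠ 0 := by
    simp [Real.pi_ne_zero, Complex.I_ne_zero]
  rw [← Complex.exp_nat_mul, Complex.exp_eq_one_iff]
  constructor
  · rintro ⟨m, hm⟩
    have hm2 : ((b : ℂ) / A) * (2 * Real.pi * Complex.I) = (m : ℂ) * (2 * Real.pi * Complex.I) := by
      rw [← hm]; ring
    have hb : (b : ℂ) / A = (m : ℂ) := mul_right_cancel₀ h2 hm2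
    rw [div_eq_iff hA'] at hb
    have hb' : (b : ℤ) = m * A := by exact_mod_cast hb
    have : (A : ℤ) ∣ (b : ℤ) := ⟨m, by linarith⟩
    exact_mod_cast this
  · rintro ⟨c, rfl⟩
    exact ⟨c, by push_cast; field_simp⟩

lemma coord_sum (ζ : ℂ) (hζ : ζ ≠ 0) (b Nn : ℕ) (hb : 0 < b) (hbN : b ∣ Nn) (w : ℤ) :
    ∑ c ∈ Finset.Ico (0:ℤ) (Nn:ℤ), (if (b:ℤ) ∣ (c - w) then ζ ^ c else 0)
      = ζ ^ (w % (b:ℤ)) * ∑ m ∈ Finset.range (Nn / b), (ζ ^ b) ^ m := by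
  classical
  obtain ⟨q, rfl⟩ := hbN
  rw [Nat.mul_div_cancel_left q hb]
  set r : ℤ := w % (b:ℤ) with hr
  have hb' : (0:ℤ) < b := by exact_mod_cast hb
  have hr0 : 0 ≤ r := Int.emod_nonneg w hb'.ne'
  have hrb : r < b := Int.emod_lt_of_pos w hb'
  have hwr : (b:ℤ) ∣ w - r := by
    rw [hr, Int.emod_def]; exact ⟨w / b, by ring⟩
  rw [← Finset.sum_filter]
  have key : ∑ c ∈ (Finset.Ico (0:ℤ) ((b*q : ℕ):ℤ)).filter (fun c => (b:ℤ) ∣ (c - w)), ζ ^ c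
      = ∑ m ∈ Finset.range q, ζ ^ (r + (b:ℤ) * (m:ℤ)) := by
    apply Finset.sum_nbij' (i := fun c => ((c - r) / (b:ℤ)).toNat)
      (j := fun m => r + (b:ℤ) * (m:ℤ))
    · intro c hc
      simp only [Finset.mem_filter, Finset.mem_Ico] at hc
      obtain ⟨⟨hc0, hcN⟩, hdvd⟩ := hc
      have hdr : (b:ℤ) ∣ c - r := by
        have := dvd_add hdvd hwr
        simpa [sub_add_sub_cancel] using this
      obtain ⟨k, hk⟩ := hdr
      have hk0 : 0 ≤ k := by nlinarith
      have hkq : k < q := by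
        push_cast at hcN
        nlinarith
      simp only [Finset.mem_range, hk, Int.mul_ediv_cancel_left _ hb'.ne']
      omega
    · intro m hm
      simp only [Finset.mem_range] at hm
      simp only [Finset.mem_filter, Finset.mem_Ico]
      refine ⟨⟨by positivity, ?_⟩, ?_⟩
      · push_cast
        nlinarith [Int.ofNat_lt.2 hm]
      · have : r + (b:ℤ) * m - w = -(w - r) + b * m := by ring
        rw [this]
        exact dvd_add (dvd_neg.mpr hwr) ⟨m, rfl⟩
    · intro c hc
      simp only [Finset.mem_filter, Finset.mem_Ico] at hc
      obtain ⟨⟨hc0, hcN⟩, hdvd⟩ := hc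
      have hdr : (b:ℤ) ∣ c - r := by
        have := dvd_add hdvd hwr
        simpa [sub_add_sub_cancel] using this
      obtain ⟨k, hk⟩ := hdr
      have hk0 : 0 ≤ k := by nlinarith
      rw [hk, Int.mul_ediv_cancel_left _ hb'.ne', Int.toNat_of_nonneg hk0]
      omega
    · intro m hm
      rw [add_sub_cancel_left, Int.mul_ediv_cancel_left _ hb'.ne', Int.toNat_natCast]
    · intro c hc
      simp only [Finset.mem_filter, Finset.mem_Ico] at hc
      obtain ⟨⟨hc0, hcN⟩, hdvd⟩ := hc
      have hdr : (b:ℤ) ∣ c - r := by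
        have := dvd_add hdvd hwr
        simpa [sub_add_sub_cancel] using this
      obtain ⟨k, hk⟩ := hdr
      have hk0 : 0 ≤ k := by nlinarith
      rw [hk, Int.mul_ediv_cancel_left _ hb'.ne']
      rw [Int.toNat_of_nonneg hk0]
      congr 1
      omega
  rw [key, Finset.mul_sum]
  apply Finset.sum_congr rfl
  intro m _
  rw [zpow_add₀ hζ, show ((b:ℤ) * (m:ℤ)) = ((b*m : ℕ):ℤ) by push_cast; ring, zpow_natCast,
    pow_mul]

lemma coord_sum_zero (ζ : ℂ) (hζ : ζ ≠ 0) (b Nn : ℕ) (hb : 0 < b) (hbN : b ∣ Nn) (w : ℤ)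
    (h1 : ζ ^ b ≠ 1) (hN1 : ζ ^ Nn = 1) :
    ∑ c ∈ Finset.Ico (0:ℤ) (Nn:ℤ), (if (b:ℤ) ∣ (c - w) then ζ ^ c else 0) = 0 := by
  rw [coord_sum ζ hζ b Nn hb hbN w, geom_sum_eq h1]
  rw [← pow_mul, Nat.mul_div_cancel' hbN, hN1]
  simp

lemma coord_sum_ne_zero (ζ : ℂ) (hζ : ζ ≠ 0) (b Nn : ℕ) (hb : 0 < b) (hbN : b ∣ Nn)
    (hN : 0 < Nn) (w : ℤ) (h1 : ζ ^ b = 1) :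
    ∑ c ∈ Finset.Ico (0:ℤ) (Nn:ℤ), (if (b:ℤ) ∣ (c - w) then ζ ^ c else 0) ≠ 0 := by
  rw [coord_sum ζ hζ b Nn hb hbN w, h1]
  simp only [one_pow, Finset.sum_const, Finset.card_range, nsmul_eq_mul, mul_one]
  apply mul_ne_zero (zpow_ne_zero _ hζ)
  have : 0 < Nn / b := Nat.div_pos (Nat.le_of_dvd hN hbN) hb
  exact_mod_cast Nat.cast_ne_zero.2 this.ne'

end AuxTilingLemmas

open Finset in
theorem tiling_has_two_translate_tiles (d : ℕ) (hd : 1 ≤ d) (n : ℕ) (hn : 2 ≤ n)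
    (v : Fin n → Fin d → ℤ) (a : Fin n → Fin d → ℕ)
    (ha : ∀ j i, 0 < a j i)
    (hdisj : ∀ j m, j ≠ m → Disjoint (cartCoset d (v j) (a j)) (cartCoset d (v m) (a m)))
    (hcover : (⋃ j, cartCoset d (v j) (a j)) = Set.univ) :
    ∃ j m, j ≠ m ∧
      {x : Fin d → ℤ | ∀ i, (a j i : ℤ) ∣ x i} = {x : Fin d → ℤ | ∀ i, (a m i : ℤ) ∣ x i} := by
  classical
  by_contra hcon
  push_neg at hcon
  have hinj : Function.Injective a := by
    intro j m hjm
    by_contra hne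
    exact hcon j m hne (by rw [hjm])
  have hne : (Finset.univ : Finset (Fin n)).Nonempty := ⟨⟨0, by omega⟩, Finset.mem_univ _⟩
  obtain ⟨j₀, -, hmax⟩ := Finset.exists_max_image Finset.univ (fun j => ∏ i, a j i) hne
  have hmax' : ∀ j, (∀ i, a j₀ i ∣ a j i) → j = j₀ := by
    intro j hdvd
    apply hinj
    have hle : ∀ k, a j₀ k ≤ a j k := fun k => Nat.le_of_dvd (ha j k) (hdvd k)
    funext i
    by_contra hne2
    have hlt : a j₀ i < a j i := lt_of_le_of_ne (hle i) (fun h => hne2 h.symm)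
    have : ∏ k, a j₀ k < ∏ k, a j k :=
      Finset.prod_lt_prod (fun k _ => ha j₀ k) (fun k _ => hle k)
        ⟨i, Finset.mem_univ i, hlt⟩
    exact absurd (hmax j (Finset.mem_univ j)) (by omega)
  -- there is a coordinate where a j₀ > 1
  have hi₀ : ∃ i₀, 1 < a j₀ i₀ := by
    by_contra h1
    push_neg at h1
    have hall : ∀ j, j = j₀ := fun j => hmax' j (fun i => by
      have := h1 i; have := ha j₀ i
      have : a j₀ i = 1 := by omega
      simp [this])
    have h0 : (⟨0, by omega⟩ : Fin n) = j₀ := hall _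
    have h1' : (⟨1, by omega⟩ : Fin n) = j₀ := hall _
    have : (⟨0, by omega⟩ : Fin n) = (⟨1, by omega⟩ : Fin n) := by rw [h0, h1']
    simp at this
  obtain ⟨i₀, hi₀⟩ := hi₀
  -- setup
  set ζ : Fin d → ℂ := fun i => Complex.exp (2 * Real.pi * Complex.I / (a j₀ i)) with hζdef
  have hζ0 : ∀ i, ζ i ≠ 0 := fun i => Complex.exp_ne_zero _
  have hζpow : ∀ i (b : ℕ), ζ i ^ b = 1 ↔ a j₀ i ∣ b := fun i b =>
    zeta_pow_eq_one_iff (a j₀ i) (ha j₀ i) b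
  set N : Fin d → ℕ := fun i => ∏ j, a j i with hNdef
  have hNpos : ∀ i, 0 < N i := fun i => Finset.prod_pos (fun j _ => ha j i)
  have hdvdN : ∀ j i, a j i ∣ N i := fun j i =>
    Finset.dvd_prod_of_mem (fun j => a j i) (Finset.mem_univ j)
  have hζN : ∀ i, ζ i ^ (N i) = 1 := fun i => (hζpow i (N i)).2 (hdvdN j₀ i)
  -- tile sums
  set A : Fin n → Fin d → ℂ := fun j i =>
    ∑ c ∈ Finset.Ico (0:ℤ) ((N i : ℕ):ℤ), (if ((a j i : ℕ):ℤ) ∣ (c - v j i) then ζ i ^ c else 0)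
    with hAdef
  -- the box
  set box : Finset (Fin d → ℤ) := Fintype.piFinset (fun i => Finset.Ico (0:ℤ) ((N i : ℕ):ℤ))
    with hboxdef
  -- total sum is zero
  have htotal : ∑ x ∈ box, ∏ i, ζ i ^ (x i) = 0 := by
    rw [hboxdef, ← Finset.prod_univ_sum]
    apply Finset.prod_eq_zero (Finset.mem_univ i₀)
    have h1 : ζ i₀ ^ 1 ≠ 1 := fun h =>
      absurd (Nat.le_of_dvd one_pos ((hζpow i₀ 1).1 h)) (by omega)
    have := coord_sum_zero (ζ i₀) (hζ0 i₀) 1 (N i₀) one_pos (one_dvd _) 0 (by simpa using h1)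
      (hζN i₀)
    simpa using this
  -- decompose total sum by tiles
  have hsplit : ∑ x ∈ box, ∏ i, ζ i ^ (x i)
      = ∑ j, ∑ x ∈ box, (if x ∈ cartCoset d (v j) (a j) then ∏ i, ζ i ^ (x i) else 0) := by
    rw [Finset.sum_comm]
    apply Finset.sum_congr rfl
    intro x _
    have hx : x ∈ ⋃ j, cartCoset d (v j) (a j) := by rw [hcover]; trivial
    obtain ⟨j, hj⟩ := Set.mem_iUnion.1 hx
    rw [Finset.sum_eq_single_of_mem j (Finset.mem_univ j)]
    · rw [if_pos hj]
    · intro m _ hm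
      rw [if_neg]
      exact fun hxm => Set.disjoint_left.1 (hdisj m j hm) hxm hj
  -- each tile sum factors
  have htile : ∀ j, ∑ x ∈ box, (if x ∈ cartCoset d (v j) (a j) then ∏ i, ζ i ^ (x i) else 0)
      = ∏ i, A j i := by
    intro j
    have hfac : ∏ i, A j i = ∑ x ∈ box,
        ∏ i, (if ((a j i : ℕ):ℤ) ∣ (x i - v j i) then ζ i ^ (x i) else 0) :=
      Finset.prod_univ_sum _ _
    rw [hfac]
    apply Finset.sum_congr rfl
    intro x _
    by_cases hx : x ∈ cartCoset d (v j) (a j)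
    · rw [if_pos hx]
      apply Finset.prod_congr rfl
      intro i _
      rw [if_pos (hx i)]
    · rw [if_neg hx]
      have : ∃ i, ¬ ((a j i : ℤ) ∣ (x i - v j i)) := by
        by_contra hall
        push_neg at hall
        exact hx hall
      obtain ⟨i, hi⟩ := this
      refine (Finset.prod_eq_zero (Finset.mem_univ i) ?_).symm
      exact if_neg hi
  -- tile sums vanish except j₀
  have hvanish : ∀ j, j ≠ j₀ → ∏ i, A j i = 0 := by
    intro j hj
    have : ∃ i, ¬ (a j₀ i ∣ a j i) := by
      by_contra hall
      push_neg at hall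
      exact hj (hmax' j hall)
    obtain ⟨i, hi⟩ := this
    apply Finset.prod_eq_zero (Finset.mem_univ i)
    exact coord_sum_zero (ζ i) (hζ0 i) (a j i) (N i) (ha j i) (hdvdN j i) (v j i)
      (fun h => hi ((hζpow i (a j i)).1 h)) (hζN i)
  -- j₀ tile sum is nonzero
  have hj₀ : ∏ i, A j₀ i ≠ 0 := by
    apply Finset.prod_ne_zero_iff.2
    intro i _
    exact coord_sum_ne_zero (ζ i) (hζ0 i) (a j₀ i) (N i) (ha j₀ i) (hdvdN j₀ i) (hNpos i)
      (v j₀ i) ((hζpow i (a j₀ i)).2 dvd_rfl)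
  -- combine
  have : (0:ℂ) = ∏ i, A j₀ i := by
    rw [← htotal, hsplit]
    rw [Finset.sum_congr rfl (fun j _ => htile j)]
    rw [Finset.sum_eq_single_of_mem j₀ (Finset.mem_univ j₀) (fun j _ hj => hvanish j hj)]
  exact hj₀ this.symm
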